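/- Let u₁, u₂, g ∈ ℝ³; let α₁, α₂ > 0 with α₁ + α₂ = 1; let ρ₁, ρ₂ > 0, ρ = α₁ρ₁ + α₂ρ₂, y_k = α_kρ_k/ρ, ū = y₁u₁ + y₂u₂; let T₁, T₂ > 0; let ϑ ≥ 0, ς ≥ 0, B ≥ 0; let D₁, D₂ be symmetric 3×3 real matrices and μ₁, μ₂, μ_{b,1}, μ_{b,2} ≥ 0. Define M₁ = ϑ(u₂ − u₁) = −M₂; Q₁ = ς(T₂ − T₁) = −Q₂; the interfacial stress τ_I(v) = B⟨g, v⟩(u₁ − u₂) with g₁ = g, g₂ = −g; and the Newtonian stresses τ_k = 2μ_kD_k + (μ_{b,k} − (2/3)μ_k)(tr D_k)I. Then the total pointwise entropy production of the relaxation and viscous terms is nonnegative: Σ_{k=1,2} (1/T_k)[⟨ū − u_k, M_k⟩ + ⟨u_k − ū, τ_I(g_k)⟩ + α_k(τ_k : D_k) + Q_k] ≥ 0. -/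

import Mathlib

/-- Nonnegativity of the Newtonian viscous dissipation `τ : D`. -/
lemma visc_nonneg (D : Matrix (Fin 3) (Fin 3) ℝ) (μ μb : ℝ) (hμ : 0 ≤ μ) (hμb : 0 ≤ μb)
    (τ : Matrix (Fin 3) (Fin 3) ℝ)
    (hτ : τ = (2 * μ) • D + ((μb - (2 / 3) * μ) * D.trace) • (1 : Matrix (Fin 3) (Fin 3) ℝ)) :
    0 ≤ ∑ i, ∑ j, τ i j * D i j := by
  subst hτ
  simp only [Matrix.add_apply, Matrix.smul_apply, Matrix.one_apply, Matrix.trace,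
    Matrix.diag, Fin.sum_univ_three, smul_eq_mul, mul_ite, mul_one, mul_zero]
  norm_num [Fin.ext_iff]
  nlinarith [mul_nonneg hμ (sq_nonneg (D 0 0 - D 1 1)),
    mul_nonneg hμ (sq_nonneg (D 0 0 - D 2 2)),
    mul_nonneg hμ (sq_nonneg (D 1 1 - D 2 2)),
    mul_nonneg hμ (sq_nonneg (D 0 1)), mul_nonneg hμ (sq_nonneg (D 1 0)),
    mul_nonneg hμ (sq_nonneg (D 0 2)), mul_nonneg hμ (sq_nonneg (D 2 0)),
    mul_nonneg hμ (sq_nonneg (D 1 2)), mul_nonneg hμ (sq_nonneg (D 2 1)),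
    mul_nonneg hμb (sq_nonneg (D 0 0 + D 1 1 + D 2 2))]

/-- Total pointwise entropy production of the relaxation, interfacial-stress
and Newtonian viscous terms of the two-phase model is nonnegative. -/
theorem total_entropy_production_nonneg
    (u₁ u₂ g : EuclideanSpace ℝ (Fin 3))
    (α₁ α₂ ρ₁ ρ₂ ρ y₁ y₂ : ℝ)
    (hα₁ : 0 < α₁) (hα₂ : 0 < α₂) (hsat : α₁ + α₂ = 1)
    (hρ₁ : 0 < ρ₁) (hρ₂ : 0 < ρ₂)
    (hρdef : ρ = α₁ * ρ₁ + α₂ * ρ₂)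
    (hy₁ : y₁ = α₁ * ρ₁ / ρ) (hy₂ : y₂ = α₂ * ρ₂ / ρ)
    (ub : EuclideanSpace ℝ (Fin 3)) (hub : ub = y₁ • u₁ + y₂ • u₂)
    (T₁ T₂ ϑ ς B : ℝ) (hT₁ : 0 < T₁) (hT₂ : 0 < T₂)
    (hϑ : 0 ≤ ϑ) (hς : 0 ≤ ς) (hB : 0 ≤ B)
    (M₁ M₂ : EuclideanSpace ℝ (Fin 3))
    (hM₁ : M₁ = ϑ • (u₂ - u₁)) (hM₂ : M₂ = ϑ • (u₁ - u₂))
    (Q₁ Q₂ : ℝ) (hQ₁ : Q₁ = ς * (T₂ - T₁)) (hQ₂ : Q₂ = ς * (T₁ - T₂))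
    (τI : EuclideanSpace ℝ (Fin 3) → EuclideanSpace ℝ (Fin 3))
    (hτI : ∀ v, τI v = (B * (inner ℝ g v : ℝ)) • (u₁ - u₂))
    (g₁ g₂ : EuclideanSpace ℝ (Fin 3)) (hg₁ : g₁ = g) (hg₂ : g₂ = -g)
    (D₁ D₂ : Matrix (Fin 3) (Fin 3) ℝ) (hD₁ : D₁.IsSymm) (hD₂ : D₂.IsSymm)
    (μ₁ μ₂ μb₁ μb₂ : ℝ)
    (hμ₁ : 0 ≤ μ₁) (hμ₂ : 0 ≤ μ₂) (hμb₁ : 0 ≤ μb₁) (hμb₂ : 0 ≤ μb₂)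
    (τ₁ τ₂ : Matrix (Fin 3) (Fin 3) ℝ)
    (hτ₁ : τ₁ = (2 * μ₁) • D₁
        + ((μb₁ - (2 / 3) * μ₁) * D₁.trace) • (1 : Matrix (Fin 3) (Fin 3) ℝ))
    (hτ₂ : τ₂ = (2 * μ₂) • D₂
        + ((μb₂ - (2 / 3) * μ₂) * D₂.trace) • (1 : Matrix (Fin 3) (Fin 3) ℝ)) :
    0 ≤ (1 / T₁) * ((inner ℝ (ub - u₁) M₁ : ℝ) + (inner ℝ (u₁ - ub) (τI g₁) : ℝ)
            + α₁ * (∑ i, ∑ j, τ₁ i j * D₁ i j) + Q₁)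
        + (1 / T₂) * ((inner ℝ (ub - u₂) M₂ : ℝ) + (inner ℝ (u₂ - ub) (τI g₂) : ℝ)
            + α₂ * (∑ i, ∑ j, τ₂ i j * D₂ i j) + Q₂) := by
  have hρ : 0 < ρ := by rw [hρdef]; positivity
  have hy₁n : 0 ≤ y₁ := by rw [hy₁]; positivity
  have hy₂n : 0 ≤ y₂ := by rw [hy₂]; positivity
  have hsum : y₁ + y₂ = 1 := by
    rw [hy₁, hy₂, ← add_div, ← hρdef, div_self hρ.ne']
  -- vector identities
  have hub1 : ub - u₁ = (-y₂) • (u₁ - u₂) := by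
    rw [hub, show y₁ = 1 - y₂ by linarith]; module
  have hub2 : ub - u₂ = y₁ • (u₁ - u₂) := by
    rw [hub, show y₂ = 1 - y₁ by linarith]; module
  have hu1b : u₁ - ub = y₂ • (u₁ - u₂) := by
    rw [hub, show y₁ = 1 - y₂ by linarith]; module
  have hu2b : u₂ - ub = (-y₁) • (u₁ - u₂) := by
    rw [hub, show y₂ = 1 - y₁ by linarith]; module
  have hM₁' : M₁ = (-ϑ) • (u₁ - u₂) := by rw [hM₁]; module
  set w : ℝ := ‖u₁ - u₂‖ ^ 2 with hw
  have hwn : 0 ≤ w := sq_nonneg _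
  set G : ℝ := ‖g‖ ^ 2 with hG
  have hGn : 0 ≤ G := sq_nonneg _
  -- inner product computations
  have i1 : (inner ℝ (ub - u₁) M₁ : ℝ) = ϑ * y₂ * w := by
    rw [hub1, hM₁', real_inner_smul_left, real_inner_smul_right,
      real_inner_self_eq_norm_sq]; ring
  have i2 : (inner ℝ (ub - u₂) M₂ : ℝ) = ϑ * y₁ * w := by
    rw [hub2, hM₂, real_inner_smul_left, real_inner_smul_right,
      real_inner_self_eq_norm_sq]; ring
  have i3 : (inner ℝ (u₁ - ub) (τI g₁) : ℝ) = B * G * y₂ * w := by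
    rw [hg₁, hτI g, hu1b, real_inner_smul_left, real_inner_smul_right,
      real_inner_self_eq_norm_sq, real_inner_self_eq_norm_sq]; ring
  have i4 : (inner ℝ (u₂ - ub) (τI g₂) : ℝ) = B * G * y₁ * w := by
    rw [hg₂, hτI (-g), hu2b, real_inner_smul_left, real_inner_smul_right,
      inner_neg_right, real_inner_self_eq_norm_sq, real_inner_self_eq_norm_sq]; ring
  have hS₁ := visc_nonneg D₁ μ₁ μb₁ hμ₁ hμb₁ τ₁ hτ₁
  have hS₂ := visc_nonneg D₂ μ₂ μb₂ hμ₂ hμb₂ τ₂ hτ₂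
  set S₁ : ℝ := ∑ i, ∑ j, τ₁ i j * D₁ i j
  set S₂ : ℝ := ∑ i, ∑ j, τ₂ i j * D₂ i j
  rw [i1, i2, i3, i4, hQ₁, hQ₂]
  have hT₁' : (0:ℝ) ≤ 1 / T₁ := by positivity
  have hT₂' : (0:ℝ) ≤ 1 / T₂ := by positivity
  have e1 : 0 ≤ (1 / T₁) * (ϑ * y₂ * w) + (1 / T₂) * (ϑ * y₁ * w) := by
    have := mul_nonneg hT₁' (mul_nonneg (mul_nonneg hϑ hy₂n) hwn)
    have := mul_nonneg hT₂' (mul_nonneg (mul_nonneg hϑ hy₁n) hwn)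
    linarith
  have e2 : 0 ≤ (1 / T₁) * (B * G * y₂ * w) + (1 / T₂) * (B * G * y₁ * w) := by
    have := mul_nonneg hT₁' (mul_nonneg (mul_nonneg (mul_nonneg hB hGn) hy₂n) hwn)
    have := mul_nonneg hT₂' (mul_nonneg (mul_nonneg (mul_nonneg hB hGn) hy₁n) hwn)
    linarith
  have e3 : 0 ≤ (1 / T₁) * (α₁ * S₁) + (1 / T₂) * (α₂ * S₂) := by
    have := mul_nonneg hT₁' (mul_nonneg hα₁.le hS₁)
    have := mul_nonneg hT₂' (mul_nonneg hα₂.le hS₂)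
    linarith
  have e4 : 0 ≤ (1 / T₁) * (ς * (T₂ - T₁)) + (1 / T₂) * (ς * (T₁ - T₂)) := by
    have key : (1 / T₁) * (ς * (T₂ - T₁)) + (1 / T₂) * (ς * (T₁ - T₂))
        = ς * (T₂ - T₁) ^ 2 / (T₁ * T₂) := by
      field_simp; ring
    rw [key]; positivity
  linarith
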